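/- Let G be a bipartite graph with girth g. If W is a closed walk with cycle of length i ≤ 2g−2, then the edge-induced subgraph on the edge set of W contains exactly one cycle. -/

import Mathlib

open SimpleGraph

def cycleFree {V : Type*} {G : SimpleGraph V} {u v : V} (w : G.Walk u v) : Prop :=
  (SimpleGraph.fromEdgeSet {e | e ∈ w.edges}).IsAcyclic

def isCWWC {V : Type*} {G : SimpleGraph V} {u : V} (w : G.Walk u u) : Prop :=
  ¬ w.IsCycle ∧ ¬ cycleFree w

section Aux
variable {V : Type*} {G : SimpleGraph V}

private lemma walk_parity [DecidableEq V] {u v : V} (p : G.Walk u v) (x : V) :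
    (p.edges.countP fun e => x ∈ e) % 2
      = ((if x = u then 1 else 0) + (if x = v then 1 else 0)) % 2 := by
  induction p with
  | @nil u => by_cases h : x = u <;> simp [h]
  | @cons u b v h q ih =>
    have hub : u ≠ b := h.ne
    simp only [SimpleGraph.Walk.edges_cons, List.countP_cons, Sym2.mem_iff, decide_eq_true_eq]
    have hite : (if x = u ∨ x = b then 1 else 0)
        = (if x = u then 1 else 0) + (if x = b then 1 else 0) := by
      by_cases h1 : x = u <;> by_cases h2 : x = b <;> simp_all
    rw [hite]
    omega

private lemma countP_eq_sum {α : Type*} [DecidableEq α] (l : List α) (p : α → Prop)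
    [DecidablePred p] :
    (l.countP fun a => p a) = ∑ a ∈ l.toFinset.filter p, l.count a := by
  rw [← Multiset.coe_countP, Multiset.countP_eq_card_filter]
  rw [← Multiset.toFinset_sum_count_eq (Multiset.filter p ↑l)]
  rw [Multiset.toFinset_filter]
  simp only [List.toFinset_coe]
  refine Finset.sum_congr rfl fun a ha => ?_
  have hpa := (Finset.mem_filter.1 ha).2
  simp [Multiset.count_filter, hpa]

private lemma list_countP_mod_two {α : Type*} [DecidableEq α] (l : List α) (p : α → Prop)
    [DecidablePred p] :
    (l.countP fun a => p a) % 2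
      = (((l.toFinset.filter fun a => Odd (l.count a)).filter p).card) % 2 := by
  rw [countP_eq_sum l p, Finset.sum_nat_mod]
  have h2 : ∀ a ∈ l.toFinset.filter p, l.count a % 2 = if Odd (l.count a) then 1 else 0 := by
    intro a _
    rcases Nat.even_or_odd (l.count a) with he | ho
    · simp [Nat.not_odd_iff_even.2 he, Nat.even_iff.1 he]
    · simp [ho, Nat.odd_iff.1 ho]
  rw [Finset.sum_congr rfl h2, ← Finset.card_filter, Finset.filter_comm]

private lemma nodup_filter_card {α : Type*} [DecidableEq α] {l : List α} (hl : l.Nodup)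
    (p : α → Prop) [DecidablePred p] :
    (l.toFinset.filter p).card = l.countP fun a => p a := by
  rw [countP_eq_sum l p]
  rw [Finset.card_eq_sum_ones]
  refine Finset.sum_congr rfl fun a ha => ?_
  exact (List.count_eq_one_of_mem hl (List.mem_toFinset.1 (Finset.mem_filter.1 ha).1)).symm

private lemma girth_le_length {u : V} {c : G.Walk u u} (hc : c.IsCycle) :
    G.girth ≤ c.length := by
  have h1 : G.egirth ≤ (c.length : ℕ∞) := by
    refine iInf_le_of_le u (iInf_le_of_le c ?_)
    exact iInf_le _ hc
  have := ENat.toNat_le_toNat h1 (by simp)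
  simpa [SimpleGraph.girth] using this

private lemma exists_cycle_of_even [DecidableEq V] {E : Finset (Sym2 V)}
    (hE : ∀ e ∈ E, e ∈ G.edgeSet) (hne : E.Nonempty)
    (hev : ∀ x : V, (E.filter fun e => x ∈ e).card % 2 = 0) :
    ∃ (u : V) (c : G.Walk u u), c.IsCycle ∧ ∀ e ∈ c.edges, e ∈ E := by
  classical
  set H : SimpleGraph V := fromEdgeSet ↑E with hH
  have hHG : H ≤ G := by
    calc H ≤ fromEdgeSet G.edgeSet := fromEdgeSet_mono (fun e he => hE e he)
    _ = G := fromEdgeSet_edgeSet G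
  have hedge : ∀ {x y : V} (p : H.Walk x y), ∀ e ∈ p.edges, e ∈ E := by
    intro x y p e he
    have h1 : e ∈ H.edgeSet := p.edges_subset_edgeSet he
    rw [hH, edgeSet_fromEdgeSet] at h1
    exact h1.1
  have hbound : ∀ {x y : V} (p : H.Walk x y), p.IsPath → p.length ≤ E.card := by
    intro x y p hp
    calc p.length = p.edges.length := (Walk.length_edges p).symm
    _ = p.edges.toFinset.card := (List.toFinset_card_of_nodup hp.isTrail.edges_nodup).symm
    _ ≤ E.card := Finset.card_le_card (fun e he => hedge p e (List.mem_toFinset.1 he))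
  obtain ⟨a, b, hab⟩ := Sym2.exists.1 hne
  have hGab : G.Adj a b := (G.mem_edgeSet).1 (hE _ hab)
  have hab' : H.Adj a b := (fromEdgeSet_adj _).2 ⟨hab, hGab.ne⟩
  set P : ℕ → Prop := fun n => ∃ (x y : V) (p : H.Walk x y), p.IsPath ∧ p.length = n with hP
  have hP1 : P 1 := by
    refine ⟨a, b, Walk.cons hab' Walk.nil, ?_, by simp⟩
    rw [Walk.cons_isPath_iff]
    simp [hGab.ne]
  have hcard1 : 1 ≤ E.card := Finset.card_pos.2 hne
  set N := Nat.findGreatest P E.card with hN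
  have hPN : P N := Nat.findGreatest_spec hcard1 hP1
  have hN1 : 1 ≤ N := Nat.le_findGreatest hcard1 hP1
  have hmax : ∀ m, N < m → ¬ P m := by
    intro m hm hPm
    obtain ⟨x, y, p, hp, hl⟩ := hPm
    have hmle : m ≤ E.card := hl ▸ hbound p hp
    exact Nat.findGreatest_is_greatest hm hmle ⟨x, y, p, hp, hl⟩
  obtain ⟨x, y, p, hp, hlN⟩ := hPN
  cases p with
  | nil => simp at hlN; omega
  | @cons x b₁ y h₀ q =>
    have hf : s(x, b₁) ∈ E := hedge (Walk.cons h₀ q) _ (by simp)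
    have h2 : 1 < (E.filter fun e => x ∈ e).card := by
      have h1le : 0 < (E.filter fun e => x ∈ e).card :=
        Finset.card_pos.2 ⟨s(x, b₁), Finset.mem_filter.2 ⟨hf, Sym2.mem_mk_left x b₁⟩⟩
      have := hev x
      omega
    obtain ⟨e', he', hne'⟩ := Finset.exists_mem_ne h2 s(x, b₁)
    obtain ⟨he'E, hxe'⟩ := Finset.mem_filter.1 he'
    obtain ⟨c, rfl⟩ := Sym2.mem_iff_exists.1 hxe'
    have hGxc : G.Adj x c := (G.mem_edgeSet).1 (hE _ he'E)
    have hxc : H.Adj x c := (fromEdgeSet_adj _).2 ⟨he'E, hGxc.ne⟩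
    have hxq : x ∉ q.support := ((Walk.cons_isPath_iff h₀ q).1 hp).2
    by_cases hc : c ∈ (Walk.cons h₀ q).support
    · set q' := (Walk.cons h₀ q).takeUntil c hc with hq'def
      have hq' : q'.IsPath := hp.takeUntil hc
      have hnotmem : s(c, x) ∉ q'.edges := by
        intro hmem
        have h3 : s(c, x) ∈ (Walk.cons h₀ q).edges :=
          Walk.edges_takeUntil_subset _ hc hmem
        rw [Sym2.eq_swap] at h3
        rw [Walk.edges_cons, List.mem_cons] at h3
        rcases h3 with h3 | h3
        · exact hne' h3
        · exact hxq (Walk.fst_mem_support_of_mem_edges q h3)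
      have hcyc : (Walk.cons hxc.symm q').IsCycle :=
        (Walk.cons_isCycle_iff q' hxc.symm).2 ⟨hq', hnotmem⟩
      refine ⟨c, (Walk.cons hxc.symm q').mapLe hHG, hcyc.mapLe hHG, ?_⟩
      intro e he
      have he2 : e ∈ (Walk.cons hxc.symm q').edges := by
        simpa [Walk.mapLe, Walk.edges_map] using he
      exact hedge _ e he2
    · have hPN1 : P (N + 1) := by
        refine ⟨c, y, Walk.cons hxc.symm (Walk.cons h₀ q), ?_, by simp [hlN]⟩
        rw [Walk.cons_isPath_iff]
        exact ⟨hp, hc⟩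
      exact absurd hPN1 (hmax _ (by omega))

end Aux

/-- In a bipartite graph of girth `g`, the edge-induced subgraph of a closed walk with
cycle of length at most `2 * g - 2` contains exactly one cycle. -/
theorem stmt4 {V : Type*} (G : SimpleGraph V) (U : Set V)
    (hbip : ∀ a b : V, G.Adj a b → (a ∈ U ↔ b ∉ U))
    (g : ℕ) (hg : G.girth = g)
    (v : V) (w : G.Walk v v) (hW : isCWWC w) (hlen : w.length ≤ 2 * g - 2) :
    ∃! s : Set (Sym2 V),
      (∃ (u : V) (c : G.Walk u u), c.IsCycle ∧ {e | e ∈ c.edges} = s) ∧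
      s ⊆ {e | e ∈ w.edges} := by
  classical
  obtain ⟨hnc, hncf⟩ := hW
  -- extract a cycle from the edge-induced subgraph
  rw [cycleFree, IsAcyclic] at hncf
  push_neg at hncf
  obtain ⟨v₀, c', hc'⟩ := hncf
  have hle : fromEdgeSet {e | e ∈ w.edges} ≤ G := by
    calc fromEdgeSet {e | e ∈ w.edges} ≤ fromEdgeSet G.edgeSet :=
          fromEdgeSet_mono (fun e he => w.edges_subset_edgeSet he)
    _ = G := fromEdgeSet_edgeSet G
  set c₀ : G.Walk v₀ v₀ := c'.mapLe hle with hc₀def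
  have hc₀ : c₀.IsCycle := hc'.mapLe hle
  have hc₀sub : ∀ e ∈ c₀.edges, e ∈ w.edges := by
    intro e he
    have he2 : e ∈ c'.edges := by
      simpa [hc₀def, Walk.mapLe, Walk.edges_map] using he
    have h3 := c'.edges_subset_edgeSet he2
    rw [edgeSet_fromEdgeSet] at h3
    exact h3.1
  -- G is not acyclic, so g ≥ 3
  have hg3 : 3 ≤ g := by
    have : ¬ G.IsAcyclic := fun hac => hac c₀ hc₀
    have := three_le_girth this
    omega
  -- the odd-multiplicity edge set of w
  set O : Finset (Sym2 V) :=
    w.edges.toFinset.filter (fun e => Odd (w.edges.count e)) with hO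
  -- every cycle inside w has edge finset equal to O
  have key : ∀ (u1 : V) (c1 : G.Walk u1 u1), c1.IsCycle →
      (∀ e ∈ c1.edges, e ∈ w.edges) → c1.edges.toFinset = O := by
    intro u1 c1 hc1 hsub
    by_contra hneq
    set S : Finset (Sym2 V) := c1.edges.toFinset with hS
    set E : Finset (Sym2 V) := symmDiff O S with hE
    have hEne : E.Nonempty := by
      rw [Finset.nonempty_iff_ne_empty]
      intro h
      exact hneq (symmDiff_eq_bot.1 h).symm
    have hSsub : ∀ e ∈ S, e ∈ w.edges.toFinset := by
      intro e he
      exact List.mem_toFinset.2 (hsub e (List.mem_toFinset.1 he))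
    have hEG : ∀ e ∈ E, e ∈ G.edgeSet := by
      intro e he
      rcases Finset.mem_symmDiff.1 he with ⟨h1, _⟩ | ⟨h1, _⟩
      · exact w.edges_subset_edgeSet (List.mem_toFinset.1 (Finset.mem_filter.1 h1).1)
      · exact c1.edges_subset_edgeSet (List.mem_toFinset.1 h1)
    -- parity of degrees
    have hOdeg : ∀ x : V, (O.filter fun e => x ∈ e).card % 2 = 0 := by
      intro x
      have h1 := list_countP_mod_two w.edges (fun e => x ∈ e)
      have h2 := walk_parity w x
      rw [h2] at h1
      rw [hO]
      by_cases hx : x = v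
      · subst hx
        simp only [if_pos rfl] at h1
        omega
      · rw [if_neg hx] at h1
        omega
    have hSdeg : ∀ x : V, (S.filter fun e => x ∈ e).card % 2 = 0 := by
      intro x
      have h1 := nodup_filter_card hc1.isTrail.edges_nodup (fun e => x ∈ e)
      have h2 := walk_parity c1 x
      rw [hS, h1]
      by_cases hx : x = u1
      · subst hx
        simp only [if_pos rfl] at h2
        omega
      · rw [if_neg hx] at h2
        omega
    have hEdeg : ∀ x : V, (E.filter fun e => x ∈ e).card % 2 = 0 := by
      intro x
      have hfil : E.filter (fun e => x ∈ e)
          = symmDiff (O.filter fun e => x ∈ e) (S.filter fun e => x ∈ e) := by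
        ext e
        simp only [Finset.mem_filter, Finset.mem_symmDiff, hE]
        tauto
      have hA := hOdeg x
      have hB := hSdeg x
      set A := O.filter fun e => x ∈ e
      set B := S.filter fun e => x ∈ e
      have h1 := Finset.card_union_add_card_inter A B
      have h2 : symmDiff A B = (A ∪ B) \ (A ∩ B) := by
        ext e
        simp only [Finset.mem_symmDiff, Finset.mem_sdiff, Finset.mem_union, Finset.mem_inter]
        tauto
      have h3 : (A ∩ B).card ≤ (A ∪ B).card :=
        Finset.card_le_card Finset.inter_subset_union
      have h4 : ((A ∪ B) \ (A ∩ B)).card = (A ∪ B).card - (A ∩ B).card :=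
        Finset.card_sdiff_of_subset Finset.inter_subset_union
      rw [hfil, h2, h4]
      omega
    -- g ≤ |E| via a cycle inside E
    have hgE : g ≤ E.card := by
      obtain ⟨u2, c2, hc2, hc2sub⟩ := exists_cycle_of_even hEG hEne hEdeg
      have h1 : G.girth ≤ c2.length := _root_.girth_le_length hc2
      have h2 : c2.length ≤ E.card := by
        calc c2.length = c2.edges.length := (Walk.length_edges c2).symm
        _ = c2.edges.toFinset.card :=
            (List.toFinset_card_of_nodup hc2.isTrail.edges_nodup).symm
        _ ≤ E.card := Finset.card_le_card (fun e he => hc2sub e (List.mem_toFinset.1 he))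
      omega
    -- g ≤ |S|
    have hgS : g ≤ S.card := by
      have h1 : G.girth ≤ c1.length := _root_.girth_le_length hc1
      have h2 : S.card = c1.length := by
        rw [hS, List.toFinset_card_of_nodup hc1.isTrail.edges_nodup, Walk.length_edges]
      omega
    -- length lower bound : |E| + |S| ≤ w.length
    have hlow : E.card + S.card ≤ w.length := by
      have hsum : w.length = ∑ e ∈ w.edges.toFinset, w.edges.count e := by
        rw [← Walk.length_edges]
        have := Multiset.toFinset_sum_count_eq (↑w.edges : Multiset (Sym2 V))
        simpa [List.toFinset_coe] using this.symm
      have hOsub : O ⊆ w.edges.toFinset := Finset.filter_subset _ _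
      have hunion : O ∪ (S \ O) ⊆ w.edges.toFinset := by
        intro e he
        rcases Finset.mem_union.1 he with h | h
        · exact hOsub h
        · exact hSsub e (Finset.mem_sdiff.1 h).1
      have hdisj : Disjoint O (S \ O) := Finset.disjoint_sdiff
      have h1 : ∑ e ∈ O ∪ (S \ O), w.edges.count e ≤ ∑ e ∈ w.edges.toFinset, w.edges.count e :=
        Finset.sum_le_sum_of_subset hunion
      have h2 : ∑ e ∈ O ∪ (S \ O), w.edges.count e
          = ∑ e ∈ O, w.edges.count e + ∑ e ∈ S \ O, w.edges.count e :=
        Finset.sum_union hdisj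
      have h3 : O.card ≤ ∑ e ∈ O, w.edges.count e := by
        rw [Finset.card_eq_sum_ones]
        refine Finset.sum_le_sum fun e he => ?_
        have : e ∈ w.edges := List.mem_toFinset.1 (hOsub he)
        exact List.count_pos_iff.2 this
      have h4 : 2 * (S \ O).card ≤ ∑ e ∈ S \ O, w.edges.count e := by
        rw [Finset.card_eq_sum_ones, Finset.mul_sum]
        refine Finset.sum_le_sum fun e he => ?_
        obtain ⟨heS, heO⟩ := Finset.mem_sdiff.1 he
        have hmem : e ∈ w.edges := List.mem_toFinset.1 (hSsub e heS)
        have hpos : 0 < w.edges.count e := List.count_pos_iff.2 hmem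
        have hevn : ¬ Odd (w.edges.count e) := by
          intro hodd
          exact heO (Finset.mem_filter.2 ⟨List.mem_toFinset.2 hmem, hodd⟩)
        rw [Nat.not_odd_iff_even] at hevn
        obtain ⟨k, hk⟩ := hevn
        omega
      -- card arithmetic : E.card + S.card = O.card + 2 * (S \ O).card
      have hcards : E.card + S.card = O.card + 2 * (S \ O).card := by
        have e1 : E = (O \ S) ∪ (S \ O) := by
          ext e
          simp only [hE, Finset.mem_symmDiff, Finset.mem_union, Finset.mem_sdiff]
        have e2 : Disjoint (O \ S) (S \ O) := disjoint_sdiff_sdiff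
        have e3 : E.card = (O \ S).card + (S \ O).card := by
          rw [e1, Finset.card_union_of_disjoint e2]
        have e4 := Finset.card_sdiff_add_card_inter O S
        have e5 := Finset.card_sdiff_add_card_inter S O
        have e6 : (O ∩ S).card = (S ∩ O).card := by rw [Finset.inter_comm]
        omega
      omega
    omega
  -- conclude
  refine ⟨{e | e ∈ c₀.edges}, ⟨⟨v₀, c₀, hc₀, rfl⟩, fun e he => hc₀sub e he⟩, ?_⟩
  rintro t ⟨⟨u2, c2, hc2, rfl⟩, hsub2⟩
  have h2 := key u2 c2 hc2 (fun e he => hsub2 he)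
  have h0 := key v₀ c₀ hc₀ hc₀sub
  ext e
  constructor
  · intro he
    have : e ∈ O := h2 ▸ List.mem_toFinset.2 he
    exact List.mem_toFinset.1 (h0 ▸ this)
  · intro he
    have : e ∈ O := h0 ▸ List.mem_toFinset.2 he
    exact List.mem_toFinset.1 (h2 ▸ this)
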